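/- For a finite DTMC (S, P), avoid set C ⊆ S and target set B ⊆ S, the constrained reachability probability satisfies the fixed-point equations used by the SMT encoding of the counterfactual-world probability: PUntil s = 1 for every s ∈ B, PUntil s = 0 for every s ∈ C \ B, and PUntil s = ∑_{s' ∈ S} P s s' · PUntil s' for every s ∉ B ∪ C. -/
import Mathlib

open scoped Classical

noncomputable def untilN {S : Type*} [Fintype S] (P : S → S → ℝ) (C B : Set S) :
    ℕ → S → ℝ
  | 0, s => if s ∈ B then 1 else 0
  | n + 1, s =>
      if s ∈ B then 1 else if s ∈ C then 0 else ∑ s' : S, P s s' * untilN P C B n s'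

lemma untilN_nonneg {S : Type*} [Fintype S] (P : S → S → ℝ)
    (hP : ∀ s s' : S, 0 ≤ P s s') (C B : Set S) :
    ∀ n s, 0 ≤ untilN P C B n s := by
  intro n
  induction n with
  | zero => intro s; simp only [untilN]; split <;> norm_num
  | succ n ih =>
    intro s
    simp only [untilN]
    split
    · norm_num
    split
    · norm_num
    · exact Finset.sum_nonneg fun s' _ => mul_nonneg (hP s s') (ih s')

lemma untilN_le_one {S : Type*} [Fintype S] (P : S → S → ℝ)
    (hP : ∀ s s' : S, 0 ≤ P s s') (hsum : ∀ s : S, ∑ s' : S, P s s' = 1)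
    (C B : Set S) : ∀ n s, untilN P C B n s ≤ 1 := by
  intro n
  induction n with
  | zero => intro s; simp only [untilN]; split <;> norm_num
  | succ n ih =>
    intro s
    simp only [untilN]
    split
    · norm_num
    split
    · norm_num
    · calc ∑ s' : S, P s s' * untilN P C B n s'
          ≤ ∑ s' : S, P s s' * 1 :=
            Finset.sum_le_sum fun s' _ =>
              mul_le_mul_of_nonneg_left (ih s') (hP s s')
        _ = 1 := by simp [hsum s]

lemma untilN_mono {S : Type*} [Fintype S] (P : S → S → ℝ)
    (hP : ∀ s s' : S, 0 ≤ P s s') (C B : Set S) (s : S) :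
    Monotone fun n => untilN P C B n s := by
  have key : ∀ n s, untilN P C B n s ≤ untilN P C B (n + 1) s := by
    intro n
    induction n with
    | zero =>
      intro s
      simp only [untilN]
      split
      · norm_num
      split
      · norm_num
      · exact Finset.sum_nonneg fun s' _ =>
          mul_nonneg (hP s s') (untilN_nonneg P hP C B 0 s')
    | succ n ih =>
      intro s
      simp only [untilN]
      split
      · norm_num
      split
      · norm_num
      · exact Finset.sum_le_sum fun s' _ =>
          mul_le_mul_of_nonneg_left (ih s') (hP s s')
  intro m n hmn
  induction hmn with
  | refl => exact le_refl _
  | step h ih => exact le_trans ih (key _ s)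

/-- For a finite DTMC (S, P), avoid set C ⊆ S and target set B ⊆ S,
the constrained reachability probability `PUntil s = ⨆ₙ until n s` satisfies the
fixed-point equations used by the SMT encoding of the counterfactual-world
probability: `PUntil s = 1` for `s ∈ B`, `PUntil s = 0` for `s ∈ C \ B`, and
`PUntil s = ∑ s', P s s' * PUntil s'` for `s ∉ B ∪ C`. -/
theorem until_fixedPoint {S : Type*} [Fintype S] [Nonempty S]
    (P : S → S → ℝ)
    (hP : ∀ s s' : S, 0 ≤ P s s')
    (hsum : ∀ s : S, ∑ s' : S, P s s' = 1)
    (C B : Set S) :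
    (∀ s ∈ B, (⨆ n : ℕ, untilN P C B n s) = 1) ∧
    (∀ s ∈ C \ B, (⨆ n : ℕ, untilN P C B n s) = 0) ∧
    (∀ s ∉ B ∪ C,
        (⨆ n : ℕ, untilN P C B n s) =
          ∑ s' : S, P s s' * ⨆ n : ℕ, untilN P C B n s') := by
  have hbdd : ∀ s : S, BddAbove (Set.range fun n => untilN P C B n s) := by
    intro s
    exact ⟨1, by rintro x ⟨n, rfl⟩; exact untilN_le_one P hP hsum C B n s⟩
  have htend : ∀ s : S, Filter.Tendsto (fun n => untilN P C B n s)
      Filter.atTop (nhds (⨆ n, untilN P C B n s)) :=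
    fun s => tendsto_atTop_ciSup (untilN_mono P hP C B s) (hbdd s)
  refine ⟨?_, ?_, ?_⟩
  · intro s hs
    have : ∀ n, untilN P C B n s = 1 := by
      intro n; cases n <;> simp [untilN, hs]
    simp [this]
  · intro s hs
    have : ∀ n, untilN P C B n s = 0 := by
      intro n; cases n <;> simp [untilN, hs.1, hs.2]
    simp [this]
  · intro s hs
    have hsB : s ∉ B := fun h => hs (Or.inl h)
    have hsC : s ∉ C := fun h => hs (Or.inr h)
    have h1 : Filter.Tendsto (fun n => untilN P C B (n + 1) s)
        Filter.atTop (nhds (⨆ n, untilN P C B n s)) :=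
      (htend s).comp (Filter.tendsto_add_atTop_nat 1)
    have h2 : Filter.Tendsto (fun n => ∑ s' : S, P s s' * untilN P C B n s')
        Filter.atTop (nhds (∑ s' : S, P s s' * ⨆ n, untilN P C B n s')) := by
      apply tendsto_finset_sum
      intro s' _
      exact (htend s').const_mul (P s s')
    have heq : (fun n => untilN P C B (n + 1) s)
        = fun n => ∑ s' : S, P s s' * untilN P C B n s' := by
      funext n; simp [untilN, hsB, hsC]
    rw [heq] at h1
    exact tendsto_nhds_unique h1 h2
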